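/- If A ⊆ ω is quasiminimal, then the degree of enumerability of A is strictly above the least Medvedev degree (i.e., E_A has no recursive member while E_A ≤_s any problem reduces appropriately), and moreover {f} ≰_s E_A for every nonrecursive total f : ω → ω. -/

import Mathlib

/-!  Common definitions: mass problems in Baire space, Medvedev reducibility,
enumeration reducibility, trees, and related notions. -/

/-- A Turing functional, given by a monotone partial recursive map taking a
finite initial segment of the oracle and an input to an output value. -/
structure TuringFunctional where
  app : List ℕ × ℕ →. ℕ
  partrec : Partrec app
  mono : ∀ {σ τ : List ℕ} {n y : ℕ}, σ <+: τ → y ∈ app (σ, n) → y ∈ app (τ, n)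

/-- `Φ.Total g f` means that `Φ(g)` is total and equals `f`. -/
def TuringFunctional.Total (Φ : TuringFunctional) (g f : ℕ → ℕ) : Prop :=
  ∀ n, ∃ k, f n ∈ Φ.app ((List.range k).map g, n)

/-- Medvedev reducibility `A ≤ₛ B` between mass problems. -/
def MedvedevLE (A B : Set (ℕ → ℕ)) : Prop :=
  ∃ Φ : TuringFunctional, ∀ g ∈ B, ∃ f, Φ.Total g f ∧ f ∈ A

/-- Medvedev equivalence. -/
def MedvedevEquiv (A B : Set (ℕ → ℕ)) : Prop := MedvedevLE A B ∧ MedvedevLE B A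

/-- The problem of enumerability of `A`: all functions with range `A`. -/
def EProb (A : Set ℕ) : Set (ℕ → ℕ) := {f | Set.range f = A}

/-- The graph of `f`, coded as a set of naturals via the pairing function. -/
def graphSet (f : ℕ → ℕ) : Set ℕ := Set.range fun n => Nat.pair n (f n)

/-- The `e`-th enumeration operator applied to a set `B`:
`x` is enumerated iff for some (code `u` of a) finite list contained in `B`,
the `e`-th partial recursive function halts on `⟨x, u⟩`. -/
def enumOpApply (e : ℕ) (B : Set ℕ) : Set ℕ :=
  {x | ∃ u : ℕ, ((Denumerable.ofNat Nat.Partrec.Code e).eval (Nat.pair x u)).Dom ∧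
        ∀ y ∈ Denumerable.ofNat (List ℕ) u, y ∈ B}

/-- Enumeration reducibility between subsets of `ℕ`. -/
def EnumLE (A B : Set ℕ) : Prop := ∃ e : ℕ, enumOpApply e B = A

/-- Enumeration equivalence. -/
def EnumEquiv (A B : Set ℕ) : Prop := EnumLE A B ∧ EnumLE B A

/-- `A` is recursively enumerable: it is the domain of a partial recursive function. -/
def REset (A : Set ℕ) : Prop := ∃ c : Nat.Partrec.Code, A = {x | (c.eval x).Dom}

/-- `A` is quasiminimal: not r.e., and every total function whose graph
enumeration-reduces to `A` is recursive. -/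
def Quasiminimal (A : Set ℕ) : Prop :=
  ¬ REset A ∧ ∀ f : ℕ → ℕ, EnumLE (graphSet f) A → Computable f

/-- `A` (as a set) has cototal enumeration degree. -/
def CototalDeg (A : Set ℕ) : Prop := ∃ B : Set ℕ, EnumEquiv B A ∧ EnumLE B Bᶜ

/-- The set `K_A = {⟨e,x⟩ : x ∈ Ψ_e(A)}`. -/
def Kset (A : Set ℕ) : Set ℕ := {p | p.unpair.2 ∈ enumOpApply p.unpair.1 A}

/-- The skip of `A`. -/
def skipSet (A : Set ℕ) : Set ℕ := (Kset A)ᶜ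

/-- The recursive join of two subsets of `ℕ`. -/
def joinSet (A B : Set ℕ) : Set ℕ :=
  {n | (n % 2 = 0 ∧ n / 2 ∈ A) ∨ (n % 2 = 1 ∧ n / 2 ∈ B)}

/-- `A` is recursively enumerable in (the characteristic function of) `X`,
i.e. `A ≤ₑ X ⊕ Xᶜ`. -/
def REin (A X : Set ℕ) : Prop := EnumLE A (joinSet X Xᶜ)

/-- Trees: subsets of `ω^{<ω}` closed under initial segments. -/
def IsTree (T : Set (List ℕ)) : Prop := ∀ ⦃σ τ : List ℕ⦄, σ <+: τ → τ ∈ T → σ ∈ T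

/-- A leaf of `T`: a node with no proper extension in `T`. -/
def IsLeaf (T : Set (List ℕ)) (σ : List ℕ) : Prop :=
  σ ∈ T ∧ ∀ τ ∈ T, σ <+: τ → τ = σ

/-- `T` has no leaves. -/
def NoLeaves (T : Set (List ℕ)) : Prop := ∀ σ ∈ T, ¬ IsLeaf T σ

/-- `T` is finitely branching. -/
def FinBranching (T : Set (List ℕ)) : Prop := ∀ σ ∈ T, {n : ℕ | σ ++ [n] ∈ T}.Finite

/-- `[T]`: the set of infinite paths through `T`. -/
def Paths (T : Set (List ℕ)) : Set (ℕ → ℕ) := {f | ∀ n, (List.range n).map f ∈ T}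

/-- A tree coded as a subset of `ℕ`. -/
def codeTree (T : Set (List ℕ)) : Set ℕ := Encodable.encode '' T

/-- `T` is `h`-bounded. -/
def BoundedTree (h : ℕ → ℕ) (T : Set (List ℕ)) : Prop :=
  ∀ σ ∈ T, ∀ i : ℕ, ∀ hi : i < σ.length, σ.get ⟨i, hi⟩ < h i

/-- A uniformly e-pointed tree with respect to functions. -/
def UEPfun (T : Set (List ℕ)) : Prop :=
  IsTree T ∧ FinBranching T ∧ NoLeaves T ∧
    ∃ e : ℕ, ∀ g ∈ Paths T, enumOpApply e (graphSet g) = codeTree T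

/-- A uniformly e-pointed tree with respect to sets (a subtree of `2^{<ω}`). -/
def UEPset (T : Set (List ℕ)) : Prop :=
  IsTree T ∧ (∀ σ ∈ T, ∀ i ∈ σ, i ≤ 1) ∧ NoLeaves T ∧
    ∃ e : ℕ, ∀ g ∈ Paths T, enumOpApply e {n | g n = 1} = codeTree T

/-- Prepend `i` to a function. -/
def consFun (i : ℕ) (f : ℕ → ℕ) : ℕ → ℕ := fun n => Nat.casesOn n i fun m => f m

/-- The mass problem `0⌢A ∪ 1⌢B`, representing the meet of the degrees of `A` and `B`. -/
def meetProb (A B : Set (ℕ → ℕ)) : Set (ℕ → ℕ) := consFun 0 '' A ∪ consFun 1 '' B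

/-- A mass problem has meet-irreducible Medvedev degree: its degree is not the
meet of two strictly larger degrees. -/
def MeetIrred (X : Set (ℕ → ℕ)) : Prop :=
  ¬ ∃ B C : Set (ℕ → ℕ), MedvedevEquiv (meetProb B C) X ∧
      (MedvedevLE X B ∧ ¬ MedvedevLE B X) ∧ (MedvedevLE X C ∧ ¬ MedvedevLE C X)

/-- `σ` is an initial segment of `f`. -/
def strPrefix (σ : List ℕ) (f : ℕ → ℕ) : Prop := (List.range σ.length).map f = σ

/-- A uniform mass problem. -/
def UniformProb (A : Set (ℕ → ℕ)) : Prop :=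
  ∀ σ : List ℕ, (∃ f ∈ A, strPrefix σ f) → MedvedevLE {f | f ∈ A ∧ strPrefix σ f} A

/-- The `{0,1}`-valued diagonally nonrecursive functions. -/
def DNR2 : Set (ℕ → ℕ) :=
  {f | (∀ n, f n ≤ 1) ∧
    ∀ e y : ℕ, y ∈ (Denumerable.ofNat Nat.Partrec.Code e).eval e → f e ≠ y}

/-- `C_A`: injective enumerations of subsets of `A`. -/
def CProb (A : Set ℕ) : Set (ℕ → ℕ) :=
  {f | Function.Injective f ∧ Set.range f ⊆ A}


private lemma prefix_map_range (g : ℕ → ℕ) {a b : ℕ} (hab : a ≤ b) :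
    (List.range a).map g <+: (List.range b).map g := by
  rw [List.prefix_iff_eq_take]
  rw [List.length_map, List.length_range, ← List.map_take, List.take_range,
    min_eq_left hab]

private lemma bind_cond_dom (p : Part ℕ) (y : ℕ) :
    (p.bind fun z => bif z == y then Part.some 0 else Part.none).Dom ↔ y ∈ p := by
  rw [Part.dom_iff_mem]
  constructor
  · rintro ⟨b, hb⟩
    rw [Part.mem_bind_iff] at hb
    obtain ⟨z, hz, hb⟩ := hb
    rcases h : (z == y) with _ | _ <;> rw [h] at hb
    · simp at hb
    · rw [show z = y by simpa using h] at hz; exact hz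
  · intro hy
    exact ⟨0, Part.mem_bind_iff.2 ⟨y, hy, by simp⟩⟩

/-- If `A` is quasiminimal, then `𝔈_A` is strictly above the least Medvedev degree
(`E_A` has no recursive member), and `{f} ≰ₛ E_A` for every nonrecursive total `f`. -/
theorem stmt1 (A : Set ℕ) (hA : Quasiminimal A) :
    (¬ ∃ g ∈ EProb A, Computable g) ∧
      ∀ f : ℕ → ℕ, ¬ Computable f → ¬ MedvedevLE {f} (EProb A) := by
  classical
  constructor
  · rintro ⟨g, hg, hgc⟩
    apply hA.1
    have hp : Partrec (fun x => Nat.rfind fun n => Part.some (g n == x)) := by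
      apply Partrec.rfind
      exact Computable₂.partrec₂
        (Primrec.beq.to_comp.comp (hgc.comp Computable.snd) Computable.fst)
    obtain ⟨c, hc⟩ := Nat.Partrec.Code.exists_code.1 (Partrec.nat_iff.1 hp)
    refine ⟨c, ?_⟩
    rw [hc]
    ext x
    simp only [Set.mem_setOf_eq, Nat.rfind_dom]
    constructor
    · intro hx
      rw [← hg] at hx
      obtain ⟨n, rfl⟩ := hx
      exact ⟨n, by simp, by intros; trivial⟩
    · rintro ⟨n, hn, -⟩
      rw [← hg]
      exact ⟨n, by simpa using hn⟩
  · rintro f hf ⟨Φ, hΦ⟩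
    apply hf
    apply hA.2
    have hAne : A.Nonempty := by
      by_contra h
      apply hA.1
      obtain ⟨c, hc⟩ := Nat.Partrec.Code.exists_code.1 Nat.Partrec.none
      refine ⟨c, ?_⟩
      rw [Set.not_nonempty_iff_eq_empty.1 h, hc]
      ext x; simp
    obtain ⟨g0, hg0⟩ := (Set.to_countable A).exists_eq_range hAne
    set ψ : ℕ →. ℕ := fun m =>
      (Φ.app ((Denumerable.ofNat (List ℕ) m.unpair.2), m.unpair.1.unpair.1)).bind
        fun z => bif z == m.unpair.1.unpair.2 then Part.some 0 else Part.none with hψ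
    have hψp : Partrec ψ := by
      apply Partrec.bind
      · exact Φ.partrec.comp
          (Computable.pair
            ((Computable.ofNat (List ℕ)).comp (Computable.snd.comp Computable.unpair))
            (Computable.fst.comp (Computable.unpair.comp
              (Computable.fst.comp Computable.unpair))))
      · exact Partrec.cond
          (Primrec.beq.to_comp.comp Computable.snd
            ((Computable.snd.comp Computable.unpair).comp
              ((Computable.fst.comp Computable.unpair).comp Computable.fst)))
          ((Computable.const 0).partrec) Partrec.none
    obtain ⟨c, hc⟩ := Nat.Partrec.Code.exists_code.1 (Partrec.nat_iff.1 hψp)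
    have hdom : ∀ x u : ℕ, (c.eval (Nat.pair x u)).Dom ↔
        x.unpair.2 ∈ Φ.app (Denumerable.ofNat (List ℕ) u, x.unpair.1) := by
      intro x u
      rw [hc, hψ]
      simp only [Nat.unpair_pair]
      exact bind_cond_dom _ _
    refine ⟨Encodable.encode c, ?_⟩
    ext x
    simp only [enumOpApply, Denumerable.ofNat_encode, Set.mem_setOf_eq]
    constructor
    · rintro ⟨u, hdomu, hsub⟩
      rw [hdom] at hdomu
      set L := Denumerable.ofNat (List ℕ) u with hL
      set g : ℕ → ℕ := fun k =>
        if h : k < L.length then L.get ⟨k, h⟩ else g0 (k - L.length) with hgdef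
      have hgE : g ∈ EProb A := by
        rw [EProb, Set.mem_setOf_eq]
        apply Set.Subset.antisymm
        · rintro a ⟨k, rfl⟩
          rw [hgdef]
          by_cases h : k < L.length
          · simp only [h, dif_pos]
            exact hsub _ (L.get_mem _)
          · simp only [h, dif_neg, not_false_iff]
            rw [hg0]; exact ⟨k - L.length, rfl⟩
        · intro a ha
          rw [hg0] at ha
          obtain ⟨m, rfl⟩ := ha
          refine ⟨L.length + m, ?_⟩
          rw [hgdef]
          simp
      obtain ⟨f', htot, hf'⟩ := hΦ g hgE
      rw [Set.mem_singleton_iff] at hf'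
      subst hf'
      obtain ⟨k, hk⟩ := htot x.unpair.1
      have hLg : (List.range L.length).map g = L := by
        apply List.ext_get
        · simp
        · intro i h1 h2
          simp only [List.get_eq_getElem, List.getElem_map, List.getElem_range]
          rw [hgdef]
          simp only [List.length_map, List.length_range] at h1
          simp [h1]
      have hy : x.unpair.2 ∈
          Φ.app ((List.range (max k L.length)).map g, x.unpair.1) := by
        apply Φ.mono _ (hLg ▸ hdomu)
        exact hLg ▸ prefix_map_range g (le_max_right _ _)
      have hfn : f' x.unpair.1 ∈
          Φ.app ((List.range (max k L.length)).map g, x.unpair.1) :=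
        Φ.mono (prefix_map_range g (le_max_left _ _)) hk
      have hxy : x.unpair.2 = f' x.unpair.1 := Part.mem_unique hy hfn
      refine ⟨x.unpair.1, ?_⟩
      show Nat.pair x.unpair.1 (f' x.unpair.1) = x
      rw [← hxy, Nat.pair_unpair]
    · rintro ⟨n, rfl⟩
      obtain ⟨f', htot, hf'⟩ := hΦ g0 (by rw [EProb, Set.mem_setOf_eq, hg0])
      rw [Set.mem_singleton_iff] at hf'
      subst hf'
      obtain ⟨k, hk⟩ := htot n
      refine ⟨Encodable.encode ((List.range k).map g0), ?_, ?_⟩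
      · rw [hdom, Denumerable.ofNat_encode]
        simpa using hk
      · intro y hy
        rw [Denumerable.ofNat_encode, List.mem_map] at hy
        obtain ⟨i, _, rfl⟩ := hy
        rw [hg0]; exact ⟨i, rfl⟩
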